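/- Under the simultaneous Doeblin condition there exist β ∈ (0,1) and β₀ > 0 such that P_x^π[T ≥ n] ≤ β₀ βⁿ for every x ∈ S, every policy π ∈ 𝒫 and every n ∈ ℕ. -/

import Mathlib

open scoped Classical BigOperators ENNReal

namespace RiskSensitive

/-- A (history-dependent, randomized) policy for a finite MDP: given the past
(chronological list of (state, action) pairs) and the current state, it assigns a
probability weight to each action, concentrated on the admissible actions. -/
structure Policy (S A : Type*) [Fintype S] [Fintype A] (Adm : S → Finset A) where
  toFun : List (S × A) → S → A → ℝ
  nonneg : ∀ h s a, 0 ≤ toFun h s a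
  sum_one : ∀ h s, ∑ a, toFun h s a = 1
  supp : ∀ h s a, a ∉ Adm s → toFun h s a = 0

variable {S A : Type*} [Fintype S] [Fintype A]
variable (Adm : S → Finset A) (p : S → A → S → ℝ) (C : S → A → ℝ) (lam : ℝ)

/-- Probability of a finite trajectory (list of (action, next-state) pairs), given the
history so far and the current state. -/
noncomputable def pathProbAux (π : Policy S A Adm) :
    List (S × A) → S → List (A × S) → ℝ
  | _, _, [] => 1
  | hist, x, (a, y) :: rest =>
      π.toFun hist x a * p x a y * pathProbAux π (hist ++ [(x, a)]) y rest

/-- `pathProb π x l` is `P_x^π[A_0 = a_0, X_1 = y_1, …]` for `l = [(a_0,y_1),…]`. -/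
noncomputable def pathProb (π : Policy S A Adm) (x : S) (l : List (A × S)) : ℝ :=
  pathProbAux Adm p π [] x l

/-- Probability of a cylinder event depending on the first `n` (action, next-state) pairs. -/
noncomputable def cylProb (π : Policy S A Adm) (x : S) (n : ℕ)
    (E : (Fin n → A × S) → Prop) : ℝ :=
  ∑ v : Fin n → A × S, if E v then pathProb Adm p π x (List.ofFn v) else 0

/-- The state `X_t` along the trajectory encoded by `l`, starting from `x`. -/
def stateAt (x : S) (l : List (A × S)) (t : ℕ) : S :=
  (l.take t).foldl (fun _ q => q.2) x

/-- The final state of the finite trajectory `l` started at `x`. -/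
def lastState (x : S) (l : List (A × S)) : S :=
  l.foldl (fun _ q => q.2) x

/-- `Σ_t w(X_t, A_t)` along the finite trajectory `l` started at `x`. -/
def costSum (w : S → A → ℝ) : S → List (A × S) → ℝ
  | _, [] => 0
  | x, (a, y) :: rest => w x a + costSum w y rest

/-- `J_n(λ,π,x) = (1/λ) log E_x^π[exp(λ Σ_{t<n} C(X_t,A_t))]`. -/
noncomputable def Jn (π : Policy S A Adm) (x : S) (n : ℕ) : ℝ :=
  (1 / lam) * Real.log (∑ v : Fin n → A × S,
    pathProb Adm p π x (List.ofFn v) * Real.exp (lam * costSum C x (List.ofFn v)))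

/-- The risk-sensitive average cost `J(λ,π,x) = limsup_n J_n(λ,π,x)/n`. -/
noncomputable def Javg (π : Policy S A Adm) (x : S) : ℝ :=
  Filter.limsup (fun n : ℕ => Jn Adm p C lam π x n / n) Filter.atTop

/-- Optimal risk-sensitive average cost `J*(λ,x)`. -/
noncomputable def Jopt (x : S) : ℝ :=
  ⨅ π : Policy S A Adm, Javg Adm p C lam π x

/-- `π` is `ε`-optimal at `x`. -/
def EpsOptimalAt (π : Policy S A Adm) (x : S) (ε : ℝ) : Prop :=
  Javg Adm p C lam π x ≤ Jopt Adm p C lam x + ε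

/-- `FirstExit Q v` : the trajectory `v` leaves `{Q}` for the first time exactly at its
last step, i.e. the exit time of `Q` equals `n`. -/
def FirstExit (Q : S → Prop) {n : ℕ} (v : Fin n → A × S) : Prop :=
  0 < n ∧ (∀ t : Fin n, (t : ℕ) + 1 < n → Q (v t).2) ∧
    ∀ t : Fin n, (t : ℕ) + 1 = n → ¬ Q (v t).2

/-- `E_x^π[ exp(Σ_{t<τ} w(X_t,A_t)) ]` where `τ = min{n ≥ 1 : ¬ Q (X_n)}` is the first
exit time from `Q` (the contribution of `[τ = ∞]` is null when `τ < ∞` a.s.). -/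
noncomputable def EexitExp (π : Policy S A Adm) (x : S) (Q : S → Prop)
    (w : S → A → ℝ) : ℝ≥0∞ :=
  ∑' n : ℕ, ∑ v : Fin n → A × S,
    if FirstExit Q v then
      ENNReal.ofReal (pathProb Adm p π x (List.ofFn v) *
        Real.exp (costSum w x (List.ofFn v)))
    else 0

/-- `E_x^π[ exp(Σ_{t<T} w(X_t,A_t)) ]` with `T` the first positive arrival time to `z`. -/
noncomputable def EhitExp (π : Policy S A Adm) (x z : S) (w : S → A → ℝ) : ℝ≥0∞ :=
  EexitExp Adm p π x (fun y => y ≠ z) w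

/-- `E_x^π[T]`, the expected first positive arrival time to `z`, computed as
`Σ_{n≥0} P_x^π[T > n]`. -/
noncomputable def ExpT (π : Policy S A Adm) (x z : S) : ℝ≥0∞ :=
  ∑' n : ℕ, ENNReal.ofReal
    (cylProb Adm p π x n (fun v => ∀ t : Fin n, (v t).2 ≠ z))

/-- `P_x^π[T > n]`, the probability that `z` is not visited during the first `n` steps. -/
noncomputable def survProb (π : Policy S A Adm) (x z : S) (n : ℕ) : ℝ :=
  cylProb Adm p π x n (fun v => ∀ t : Fin n, (v t).2 ≠ z)

/-- The stationary policy induced by a choice function `f ∈ 𝔽`. -/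
noncomputable def stationary (f : S → A) (hf : ∀ s, f s ∈ Adm s) : Policy S A Adm where
  toFun := fun _ s a => if a = f s then 1 else 0
  nonneg := by intro h s a; split <;> norm_num
  sum_one := by intro h s; simp
  supp := by
    intro h s a ha
    rw [if_neg]
    intro hEq
    exact ha (hEq ▸ hf s)

/-- The simultaneous Doeblin condition: `E_x^f[T] ≤ M` for every state `x` and every
stationary policy `f`, where `T` is the first positive arrival time to `z`. -/
def Doeblin (z : S) (M : ℝ) : Prop :=
  0 < M ∧ ∀ (x : S) (f : S → A) (hf : ∀ s, f s ∈ Adm s),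
    ExpT Adm p (stationary Adm f hf) x z ≤ ENNReal.ofReal M

/-- `B_g(x) = {a ∈ A(x) : g(x) = max{g(y) : p_{xy}(a) > 0}}`. -/
def Bg (g : S → ℝ) (x : S) : Set A :=
  {a | a ∈ Adm x ∧ g x = sSup (g '' {y | 0 < p x a y})}

/-- The family `𝒢` of functions characterizing `J*(λ,·)`. -/
def Gclass : Set (S → ℝ) :=
  {g | (∀ x, g x = sInf ((fun a => sSup (g '' {y | 0 < p x a y})) '' (Adm x : Set A))) ∧
    ∃ h : S → ℝ, ∀ x,
      sInf ((fun a => Real.exp (lam * C x a) * ∑ y, p x a y * Real.exp (lam * h y)) ''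
        Bg Adm p g x) ≤ Real.exp (lam * g x + lam * h x)}

/-- The class `𝒫*` of policies which always select actions in `B*(X_t)`. -/
def Pstar : Set (Policy S A Adm) :=
  {π | ∀ (x : S) (t : ℕ),
    cylProb Adm p π x (t + 1)
      (fun v => (v (Fin.last t)).1 ∈
        Bg Adm p (Jopt Adm p C lam) (stateAt x (List.ofFn v) t)) = 1}

/-- The deviation function
`h(x) = inf_{π ∈ 𝒫*} (1/λ) log E_x^π[exp(λα Σ_{t<T}(C(X_t,A_t) − J*(λ,X_t)))]`. -/
noncomputable def hdev (z : S) (α : ℝ) (x : S) : EReal :=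
  ⨅ π ∈ Pstar Adm p C lam, ((lam⁻¹ : ℝ) : EReal) *
    ENNReal.log (EhitExp Adm p π x z
      (fun s a => lam * α * (C s a - Jopt Adm p C lam s)))

/-- `ψ(ε) = (1/λ) inf_{δ∈𝒫*} log E_z^δ[exp(λ Σ_{t<T}(C(X_t,A_t) − γ₀ − 2ε))]`. -/
noncomputable def psi (z : S) (ε : ℝ) : EReal :=
  ((lam⁻¹ : ℝ) : EReal) * ⨅ π ∈ Pstar Adm p C lam,
    ENNReal.log (EhitExp Adm p π z z
      (fun s a => lam * (C s a - Jopt Adm p C lam z - 2 * ε)))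

/-- `ξ₀ = −(1−α) log β / (λα)`. -/
noncomputable def xi0 (α β : ℝ) : ℝ := -((1 - α) * Real.log β) / (lam * α)

/-- `ξ₁`: 1 if `J*(λ,·)` is constant, otherwise the minimum gap between distinct
values of `J*(λ,·)`. -/
noncomputable def xi1 : ℝ :=
  if ∀ u v : S, Jopt Adm p C lam u = Jopt Adm p C lam v then 1
  else sInf {d | ∃ u v : S, Jopt Adm p C lam u < Jopt Adm p C lam v ∧
    d = Jopt Adm p C lam v - Jopt Adm p C lam u}

/-- `ξ = min{ξ₀, ξ₁}`. -/
noncomputable def xi (α β : ℝ) : ℝ := min (xi0 lam α β) (xi1 Adm p C lam)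

/-- The shifted policy obtained by prefixing the fixed history `pre`. -/
def shiftPolicy (π : Policy S A Adm) (pre : List (S × A)) : Policy S A Adm where
  toFun := fun h s a => π.toFun (pre ++ h) s a
  nonneg := fun h s a => π.nonneg _ s a
  sum_one := fun h s => π.sum_one _ s
  supp := fun h s a ha => π.supp _ s a ha

/-- The history (list of (state, action) pairs) along the trajectory `l` started at `x`. -/
def histOf : S → List (A × S) → List (S × A)
  | _, [] => []
  | x, (a, y) :: rest => (x, a) :: histOf y rest


/-! ### Auxiliary material for `geometric_tail` -/

theorem Policy.ext' {π π' : Policy S A Adm} (h : π.toFun = π'.toFun) : π = π' := by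
  cases π; cases π'; cases h; rfl

theorem shiftPolicy_shiftPolicy (π : Policy S A Adm) (pre pre' : List (S × A)) :
    shiftPolicy Adm (shiftPolicy Adm π pre) pre' = shiftPolicy Adm π (pre ++ pre') := by
  apply Policy.ext'
  funext h s a
  simp [shiftPolicy, List.append_assoc]

theorem pathProbAux_nil (π : Policy S A Adm) (hist : List (S × A)) (x : S) :
    pathProbAux Adm p π hist x [] = 1 := rfl

theorem pathProbAux_cons (π : Policy S A Adm) (hist : List (S × A)) (x : S)
    (a : A) (y : S) (rest : List (A × S)) :
    pathProbAux Adm p π hist x ((a, y) :: rest)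
      = π.toFun hist x a * p x a y * pathProbAux Adm p π (hist ++ [(x, a)]) y rest := rfl

theorem pathProbAux_shift (l : List (A × S)) (π : Policy S A Adm)
    (pre : List (S × A)) (x : S) :
    pathProbAux Adm p π pre x l = pathProb Adm p (shiftPolicy Adm π pre) x l := by
  induction l generalizing π pre x with
  | nil => rfl
  | cons q rest ih =>
      obtain ⟨a, y⟩ := q
      rw [pathProb, pathProbAux_cons, pathProbAux_cons, ih, ih, List.nil_append,
        shiftPolicy_shiftPolicy]
      simp [shiftPolicy]

theorem survProb_zero (π : Policy S A Adm) (x z : S) :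
    survProb Adm p π x z 0 = 1 := by
  simp [survProb, cylProb, pathProb, pathProbAux_nil]

theorem survProb_succ (π : Policy S A Adm) (x z : S) (n : ℕ) :
    survProb Adm p π x z (n + 1) = ∑ q : A × S,
      if q.2 ≠ z then
        π.toFun [] x q.1 * p x q.1 q.2 *
          survProb Adm p (shiftPolicy Adm π [(x, q.1)]) q.2 z n
      else 0 := by
  rw [survProb, cylProb, ← Equiv.sum_comp (Fin.consEquiv (fun _ : Fin (n + 1) => A × S)),
    Fintype.sum_prod_type]
  refine Finset.sum_congr rfl fun q _ => ?_
  obtain ⟨a, y⟩ := q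
  have hofn : ∀ w : Fin n → A × S,
      List.ofFn (Fin.consEquiv (fun _ : Fin (n + 1) => A × S) ((a, y), w)) =
        (a, y) :: List.ofFn w := by
    intro w
    rw [List.ofFn_succ]
    rfl
  have hcond : ∀ w : Fin n → A × S,
      (∀ t : Fin (n + 1),
        ((Fin.consEquiv (fun _ : Fin (n + 1) => A × S) ((a, y), w)) t).2 ≠ z) ↔
      (y ≠ z ∧ ∀ t : Fin n, (w t).2 ≠ z) := by
    intro w
    rw [Fin.forall_fin_succ]
    rfl
  by_cases hy : y ≠ z
  · rw [if_pos hy, survProb, cylProb, Finset.mul_sum]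
    refine Finset.sum_congr rfl fun w _ => ?_
    rw [hofn w, pathProb, pathProbAux_cons, List.nil_append, pathProbAux_shift]
    by_cases hw : ∀ t : Fin n, (w t).2 ≠ z
    · rw [if_pos ((hcond w).mpr ⟨hy, hw⟩), if_pos hw]
    · rw [if_neg (fun hc => hw ((hcond w).mp hc).2), if_neg hw, mul_zero]
  · rw [if_neg hy]
    refine Finset.sum_eq_zero fun w _ => ?_
    exact if_neg (fun hc => hy ((hcond w).mp hc).1)

theorem pathProbAux_nonneg
    (hp : ∀ (x : S), ∀ a ∈ Adm x, (∀ y, 0 ≤ p x a y) ∧ (∑ y, p x a y) = 1)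
    (π : Policy S A Adm) (l : List (A × S)) (hist : List (S × A)) (x : S) :
    0 ≤ pathProbAux Adm p π hist x l := by
  induction l generalizing hist x with
  | nil => exact zero_le_one
  | cons q rest ih =>
      obtain ⟨a, y⟩ := q
      by_cases ha : a ∈ Adm x
      · exact mul_nonneg (mul_nonneg (π.nonneg _ _ _) ((hp x a ha).1 y)) (ih _ _)
      · simp [pathProbAux_cons, π.supp _ _ _ ha]

theorem survProb_nonneg
    (hp : ∀ (x : S), ∀ a ∈ Adm x, (∀ y, 0 ≤ p x a y) ∧ (∑ y, p x a y) = 1)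
    (π : Policy S A Adm) (x z : S) (n : ℕ) :
    0 ≤ survProb Adm p π x z n := by
  refine Finset.sum_nonneg fun v _ => ?_
  split
  · exact pathProbAux_nonneg Adm p hp π _ _ _
  · exact le_refl 0

/-- The value iteration for the maximal probability of avoiding `z`. -/
noncomputable def uFun (hA : ∀ x, (Adm x).Nonempty) (z : S) : ℕ → S → ℝ
  | 0, _ => 1
  | n + 1, x => (Adm x).sup' (hA x)
      fun a => ∑ y, if y ≠ z then p x a y * uFun hA z n y else 0

section uFunLemmas

variable (hA : ∀ x, (Adm x).Nonempty)
variable (hp : ∀ (x : S), ∀ a ∈ Adm x, (∀ y, 0 ≤ p x a y) ∧ (∑ y, p x a y) = 1)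
variable (z : S)

theorem uFun_zero (x : S) : uFun Adm p hA z 0 x = 1 := rfl

theorem uFun_succ_eq (n : ℕ) (x : S) : uFun Adm p hA z (n + 1) x =
    (Adm x).sup' (hA x)
      (fun a => ∑ y, if y ≠ z then p x a y * uFun Adm p hA z n y else 0) := rfl

include hp

theorem uFun_nonneg : ∀ (n : ℕ) (x : S), 0 ≤ uFun Adm p hA z n x := by
  intro n
  induction n with
  | zero => intro x; exact zero_le_one
  | succ n ih =>
      intro x
      refine le_trans ?_ (Finset.le_sup' _ (hA x).choose_spec)
      refine Finset.sum_nonneg fun y _ => ?_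
      split
      · exact mul_nonneg ((hp x _ (hA x).choose_spec).1 y) (ih y)
      · exact le_refl 0

theorem uFun_le_one : ∀ (n : ℕ) (x : S), uFun Adm p hA z n x ≤ 1 := by
  intro n
  induction n with
  | zero => intro x; exact le_refl 1
  | succ n ih =>
      intro x
      refine Finset.sup'_le _ _ fun a ha => ?_
      calc (∑ y, if y ≠ z then p x a y * uFun Adm p hA z n y else 0)
          ≤ ∑ y, p x a y := by
            refine Finset.sum_le_sum fun y _ => ?_
            split
            · calc p x a y * uFun Adm p hA z n y ≤ p x a y * 1 :=
                mul_le_mul_of_nonneg_left (ih y) ((hp x a ha).1 y)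
               _ = p x a y := mul_one _
            · exact (hp x a ha).1 y
        _ = 1 := (hp x a ha).2

theorem uFun_succ_le : ∀ (n : ℕ) (x : S), uFun Adm p hA z (n + 1) x ≤ uFun Adm p hA z n x := by
  intro n
  induction n with
  | zero => intro x; exact uFun_le_one Adm p hA hp z 1 x
  | succ n ih =>
      intro x
      refine Finset.sup'_le _ _ fun a ha => ?_
      refine le_trans ?_ (Finset.le_sup' (fun a => ∑ y, if y ≠ z then
        p x a y * uFun Adm p hA z n y else 0) ha)
      refine Finset.sum_le_sum fun y _ => ?_
      split
      · exact mul_le_mul_of_nonneg_left (ih y) ((hp x a ha).1 y)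
      · exact le_refl 0

theorem uFun_antitone {m n : ℕ} (h : m ≤ n) (x : S) :
    uFun Adm p hA z n x ≤ uFun Adm p hA z m x := by
  induction n with
  | zero => rw [Nat.le_zero.mp h]
  | succ n ih =>
      rcases Nat.lt_or_ge m (n + 1) with hm | hm
      · exact le_trans (uFun_succ_le Adm p hA hp z n x) (ih (Nat.lt_succ_iff.mp hm))
      · rw [Nat.le_antisymm h hm]

theorem survProb_le_uFun (π : Policy S A Adm) (x : S) (n : ℕ) :
    survProb Adm p π x z n ≤ uFun Adm p hA z n x := by
  induction n generalizing π x with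
  | zero => rw [survProb_zero]; exact le_refl 1
  | succ n ih =>
      rw [survProb_succ]
      calc (∑ q : A × S, if q.2 ≠ z then
              π.toFun [] x q.1 * p x q.1 q.2 *
                survProb Adm p (shiftPolicy Adm π [(x, q.1)]) q.2 z n
            else 0)
          ≤ ∑ q : A × S, π.toFun [] x q.1 *
              (if q.2 ≠ z then p x q.1 q.2 * uFun Adm p hA z n q.2 else 0) := by
            refine Finset.sum_le_sum fun q _ => ?_
            obtain ⟨a, y⟩ := q
            by_cases ha : a ∈ Adm x
            · by_cases hy : y ≠ z
              · rw [if_pos hy, if_pos hy, mul_assoc]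
                refine mul_le_mul_of_nonneg_left ?_ (π.nonneg _ _ _)
                exact mul_le_mul_of_nonneg_left (ih _ _) ((hp x a ha).1 y)
              · rw [if_neg hy, if_neg hy, mul_zero]
            · simp [π.supp _ _ _ ha]
        _ = ∑ a : A, π.toFun [] x a *
              ∑ y, (if y ≠ z then p x a y * uFun Adm p hA z n y else 0) := by
            rw [Fintype.sum_prod_type]
            exact Finset.sum_congr rfl fun a _ => by rw [Finset.mul_sum]
        _ ≤ ∑ a : A, π.toFun [] x a * uFun Adm p hA z (n + 1) x := by
            refine Finset.sum_le_sum fun a _ => ?_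
            by_cases ha : a ∈ Adm x
            · exact mul_le_mul_of_nonneg_left
                (Finset.le_sup' (fun a => ∑ y, if y ≠ z then
                  p x a y * uFun Adm p hA z n y else 0) ha) (π.nonneg _ _ _)
            · simp [π.supp _ _ _ ha]
        _ = uFun Adm p hA z (n + 1) x := by
            rw [← Finset.sum_mul, π.sum_one, one_mul]

theorem exists_good_action (x : S) (hx : ∀ m, uFun Adm p hA z m x = 1) :
    ∃ a ∈ Adm x, p x a z = 0 ∧ ∀ y, 0 < p x a y → ∀ m, uFun Adm p hA z m y = 1 := by
  set g : A → ℕ → ℝ := fun a m => ∑ y, if y ≠ z then p x a y * uFun Adm p hA z m y else 0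
    with hg
  have hmem : ∀ m, ∃ a ∈ Adm x, g a m = 1 := by
    intro m
    obtain ⟨a, ha, hval⟩ := Finset.exists_mem_eq_sup' (hA x)
      (fun a => ∑ y, if y ≠ z then p x a y * uFun Adm p hA z m y else 0)
    refine ⟨a, ha, ?_⟩
    show (∑ y, if y ≠ z then p x a y * uFun Adm p hA z m y else 0) = 1
    rw [← hval, ← uFun_succ_eq]
    exact hx (m + 1)
  have hg_anti : ∀ a ∈ Adm x, ∀ {m m' : ℕ}, m ≤ m' → g a m' ≤ g a m := by
    intro a ha m m' h
    refine Finset.sum_le_sum fun y _ => ?_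
    split
    · exact mul_le_mul_of_nonneg_left (uFun_antitone Adm p hA hp z h y) ((hp x a ha).1 y)
    · exact le_refl 0
  have hg_le_one : ∀ a ∈ Adm x, ∀ m, g a m ≤ 1 := by
    intro a ha m
    calc g a m ≤ ∑ y, p x a y := by
          refine Finset.sum_le_sum fun y _ => ?_
          split
          · calc p x a y * uFun Adm p hA z m y ≤ p x a y * 1 :=
                mul_le_mul_of_nonneg_left (uFun_le_one Adm p hA hp z m y) ((hp x a ha).1 y)
              _ = p x a y := mul_one _
          · exact (hp x a ha).1 y
      _ = 1 := (hp x a ha).2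
  have hfix : ∃ a ∈ Adm x, ∀ m, g a m = 1 := by
    by_contra hcon
    push_neg at hcon
    have hcon' : ∀ a : A, ∃ m, a ∈ Adm x → g a m ≠ 1 := by
      intro a
      by_cases ha : a ∈ Adm x
      · obtain ⟨m, hm⟩ := hcon a ha
        exact ⟨m, fun _ => hm⟩
      · exact ⟨0, fun h => absurd h ha⟩
    choose mf hmf using hcon'
    set M := Finset.univ.sup mf with hM
    obtain ⟨a, ha, hval⟩ := hmem M
    have h1 : g a M ≤ g a (mf a) :=
      hg_anti a ha (Finset.le_sup (Finset.mem_univ a))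
    have h2 : g a (mf a) < 1 := lt_of_le_of_ne (hg_le_one a ha _) (hmf a ha)
    exact absurd hval (by linarith)
  obtain ⟨a, ha, hga⟩ := hfix
  have hsum0 : (∑ y, if y ≠ z then p x a y else 0) = 1 := by
    have h0 : (∑ y, if y ≠ z then p x a y * uFun Adm p hA z 0 y else 0) = 1 := hga 0
    simp only [uFun_zero, mul_one] at h0
    exact h0
  have hpz : p x a z = 0 := by
    have hsplit : (∑ y, p x a y) =
        (∑ y, if y = z then p x a y else 0) + ∑ y, if y ≠ z then p x a y else 0 := by
      rw [← Finset.sum_add_distrib]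
      refine Finset.sum_congr rfl fun y _ => ?_
      by_cases hy : y = z <;> simp [hy]
    have hz : (∑ y, if y = z then p x a y else 0) = p x a z := by
      simp [Finset.sum_ite_eq' Finset.univ z (fun y => p x a y)]
    rw [(hp x a ha).2, hz, hsum0] at hsplit
    linarith
  refine ⟨a, ha, hpz, fun y hy m => ?_⟩
  by_contra hne
  have hylt : uFun Adm p hA z m y < 1 :=
    lt_of_le_of_ne (uFun_le_one Adm p hA hp z m y) hne
  have hyz : y ≠ z := by rintro rfl; rw [hpz] at hy; exact lt_irrefl 0 hy
  have hlt : g a m < ∑ y, if y ≠ z then p x a y else 0 := by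
    refine Finset.sum_lt_sum (fun w _ => ?_) ⟨y, Finset.mem_univ y, ?_⟩
    · split
      · calc p x a w * uFun Adm p hA z m w ≤ p x a w * 1 :=
            mul_le_mul_of_nonneg_left (uFun_le_one Adm p hA hp z m w) ((hp x a ha).1 w)
          _ = p x a w := mul_one _
      · exact le_refl 0
    · rw [if_pos hyz, if_pos hyz]
      calc p x a y * uFun Adm p hA z m y < p x a y * 1 :=
          (mul_lt_mul_iff_right₀ hy).mpr hylt
        _ = p x a y := mul_one _
  rw [hga m, hsum0] at hlt
  exact lt_irrefl 1 hlt

end uFunLemmas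

theorem shiftPolicy_stationary (f : S → A) (hf : ∀ s, f s ∈ Adm s)
    (pre : List (S × A)) :
    shiftPolicy Adm (stationary Adm f hf) pre = stationary Adm f hf := by
  apply Policy.ext'; rfl

theorem survProb_stationary_succ (f : S → A) (hf : ∀ s, f s ∈ Adm s)
    (x z : S) (n : ℕ) :
    survProb Adm p (stationary Adm f hf) x z (n + 1) =
      ∑ y, if y ≠ z then p x (f x) y * survProb Adm p (stationary Adm f hf) y z n
        else 0 := by
  rw [survProb_succ, Fintype.sum_prod_type_right]
  refine Finset.sum_congr rfl fun y _ => ?_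
  have : ∀ a : A, (if y ≠ z then
      (stationary Adm f hf).toFun [] x a * p x a y *
        survProb Adm p (shiftPolicy Adm (stationary Adm f hf) [(x, a)]) y z n else 0)
     = if a = f x then (if y ≠ z then
        p x a y * survProb Adm p (stationary Adm f hf) y z n else 0) else 0 := by
    intro a
    rw [shiftPolicy_stationary]
    by_cases hafx : a = f x
    · simp [stationary, hafx]
    · simp [stationary, hafx]
  rw [Finset.sum_congr rfl fun a _ => this a]
  simp [Finset.sum_ite_eq' Finset.univ (f x)]

/-- under the Doeblin condition the tail of the arrival time to `z` decays
geometrically, uniformly in the initial state and the policy: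
`P_x^π[T ≥ n+1] ≤ β₀ β^(n+1)`. -/
theorem geometric_tail
    (hA : ∀ x, (Adm x).Nonempty)
    (hp : ∀ (x : S), ∀ a ∈ Adm x, (∀ y, 0 ≤ p x a y) ∧ (∑ y, p x a y) = 1)
    (z : S) (M : ℝ) (hDoe : Doeblin Adm p z M) :
    ∃ β ∈ Set.Ioo (0 : ℝ) 1, ∃ β₀ > (0 : ℝ),
      ∀ (x : S) (π : Policy S A Adm) (n : ℕ),
        survProb Adm p π x z n ≤ β₀ * β ^ (n + 1) := by
  -- Step 1: some finite horizon `m` at which the maximal survival probability is `< 1`.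
  have hU : ∃ m : ℕ, ∀ x : S, uFun Adm p hA z m x < 1 := by
    by_contra hcon
    push_neg at hcon
    have hQne : ∃ x : S, ∀ m, uFun Adm p hA z m x = 1 := by
      by_contra hq
      push_neg at hq
      choose mf hmf using hq
      obtain ⟨x, hx⟩ := hcon (Finset.univ.sup mf)
      have h1 : uFun Adm p hA z (Finset.univ.sup mf) x ≤ uFun Adm p hA z (mf x) x :=
        uFun_antitone Adm p hA hp z (Finset.le_sup (Finset.mem_univ x)) x
      have h2 : uFun Adm p hA z (mf x) x < 1 :=
        lt_of_le_of_ne (uFun_le_one Adm p hA hp z _ x) (hmf x)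
      linarith
    obtain ⟨x₀, hx₀⟩ := hQne
    have hchoice : ∀ x : S, ∃ a : A, a ∈ Adm x ∧ ((∀ m, uFun Adm p hA z m x = 1) →
        (p x a z = 0 ∧ ∀ y, 0 < p x a y → ∀ m, uFun Adm p hA z m y = 1)) := by
      intro x
      by_cases hx : ∀ m, uFun Adm p hA z m x = 1
      · obtain ⟨a, ha, h1, h2⟩ := exists_good_action Adm p hA hp z x hx
        exact ⟨a, ha, fun _ => ⟨h1, h2⟩⟩
      · exact ⟨(hA x).choose, (hA x).choose_spec, fun h => absurd h hx⟩
    choose f hf hgood using hchoice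
    have hsurv : ∀ n (x : S), (∀ m, uFun Adm p hA z m x = 1) →
        survProb Adm p (stationary Adm f hf) x z n = 1 := by
      intro n
      induction n with
      | zero => intro x _; exact survProb_zero Adm p _ x z
      | succ n ih =>
          intro x hx
          rw [survProb_stationary_succ]
          obtain ⟨hpz, hQ⟩ := hgood x hx
          have hterm : ∀ y : S, (if y ≠ z then
              p x (f x) y * survProb Adm p (stationary Adm f hf) y z n else 0)
              = p x (f x) y := by
            intro y
            by_cases hpy : p x (f x) y = 0
            · rw [hpy]; split <;> simp
            · have hpos : 0 < p x (f x) y :=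
                lt_of_le_of_ne ((hp x (f x) (hf x)).1 y) (Ne.symm hpy)
              have hyQ := hQ y hpos
              have hyz : y ≠ z := fun h => hpy (h ▸ hpz)
              rw [if_pos hyz, ih y hyQ, mul_one]
          rw [Finset.sum_congr rfl fun y _ => hterm y]
          exact (hp x (f x) (hf x)).2
    have hET : ExpT Adm p (stationary Adm f hf) x₀ z = ⊤ := by
      rw [ExpT]
      have hone : ∀ n : ℕ, ENNReal.ofReal (cylProb Adm p (stationary Adm f hf) x₀ n
          (fun v => ∀ t : Fin n, (v t).2 ≠ z)) = 1 := by
        intro n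
        have h1 := hsurv n x₀ hx₀
        rw [survProb] at h1
        rw [h1, ENNReal.ofReal_one]
      rw [tsum_congr hone]
      exact ENNReal.tsum_const_eq_top_of_ne_zero one_ne_zero
    have hle := hDoe.2 x₀ f hf
    rw [hET, top_le_iff] at hle
    exact ENNReal.ofReal_ne_top hle
  obtain ⟨m, hm⟩ := hU
  have hmpos : 0 < m := by
    rcases Nat.eq_zero_or_pos m with h | h
    · exfalso; have := hm z; rw [h, uFun_zero] at this; exact lt_irrefl 1 this
    · exact h
  -- Step 2: the sup over states, submultiplicativity, and the geometric bound.
  have hne : (Finset.univ : Finset S).Nonempty := ⟨z, Finset.mem_univ z⟩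
  set U : ℕ → ℝ := fun k => Finset.univ.sup' hne (uFun Adm p hA z k) with hUdef
  have hUk : ∀ (k : ℕ) (x : S), uFun Adm p hA z k x ≤ U k :=
    fun k x => Finset.le_sup' _ (Finset.mem_univ x)
  have hUnn : ∀ k, 0 ≤ U k := fun k => le_trans (uFun_nonneg Adm p hA hp z k z) (hUk k z)
  have hUle1 : ∀ k, U k ≤ 1 :=
    fun k => Finset.sup'_le _ _ fun x _ => uFun_le_one Adm p hA hp z k x
  have hUanti : ∀ {k l : ℕ}, k ≤ l → U l ≤ U k := by
    intro k l hkl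
    exact Finset.sup'_le _ _ fun x _ =>
      le_trans (uFun_antitone Adm p hA hp z hkl x) (hUk k x)
  have hUm : U m < 1 := (Finset.sup'_lt_iff hne).mpr fun x _ => hm x
  have husub : ∀ (n : ℕ) (x : S), uFun Adm p hA z (n + m) x ≤ uFun Adm p hA z n x * U m := by
    intro n
    induction n with
    | zero => intro x; rw [Nat.zero_add, uFun_zero, one_mul]; exact hUk m x
    | succ n ih =>
        intro x
        have harr : n + 1 + m = (n + m) + 1 := by omega
        rw [harr, uFun_succ_eq, uFun_succ_eq]
        refine Finset.sup'_le _ _ fun a ha => ?_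
        calc (∑ y, if y ≠ z then p x a y * uFun Adm p hA z (n + m) y else 0)
            ≤ ∑ y, if y ≠ z then p x a y * (uFun Adm p hA z n y * U m) else 0 := by
              refine Finset.sum_le_sum fun y _ => ?_
              split
              · exact mul_le_mul_of_nonneg_left (ih y) ((hp x a ha).1 y)
              · exact le_refl 0
          _ = (∑ y, if y ≠ z then p x a y * uFun Adm p hA z n y else 0) * U m := by
              rw [Finset.sum_mul]
              refine Finset.sum_congr rfl fun y _ => ?_
              split
              · rw [mul_assoc]
              · rw [zero_mul]
          _ ≤ ((Adm x).sup' (hA x) fun a => ∑ y,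
                if y ≠ z then p x a y * uFun Adm p hA z n y else 0) * U m := by
              exact mul_le_mul_of_nonneg_right (Finset.le_sup'
                (fun a => ∑ y, if y ≠ z then p x a y * uFun Adm p hA z n y else 0) ha)
                (hUnn m)
  have hpow : ∀ k : ℕ, U (m * k) ≤ (U m) ^ k := by
    intro k
    induction k with
    | zero => rw [Nat.mul_zero, pow_zero]; exact hUle1 0
    | succ k ih =>
        have harr : m * (k + 1) = m * k + m := by ring
        rw [harr, pow_succ]
        calc U (m * k + m) ≤ U (m * k) * U m := by
              refine Finset.sup'_le _ _ fun x _ => ?_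
              exact le_trans (husub (m * k) x)
                (mul_le_mul_of_nonneg_right (hUk (m * k) x) (hUnn m))
          _ ≤ (U m) ^ k * U m := mul_le_mul_of_nonneg_right ih (hUnn m)
  set ρ : ℝ := max (U m) 2⁻¹ with hρdef
  have hρpos : 0 < ρ := lt_of_lt_of_le (by norm_num) (le_max_right _ _)
  have hρlt1 : ρ < 1 := max_lt hUm (by norm_num)
  have hρinv : ρ⁻¹ ≤ 2 := by
    have h2 : (2 : ℝ)⁻¹ ≤ ρ := le_max_right _ _
    rw [← one_div, div_le_iff₀ hρpos]
    nlinarith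
  refine ⟨ρ ^ ((m : ℝ)⁻¹), ⟨Real.rpow_pos_of_pos hρpos _,
    Real.rpow_lt_one (le_of_lt hρpos) hρlt1 (by positivity)⟩, 2, by norm_num, ?_⟩
  intro x π n
  have hk : survProb Adm p π x z n ≤ ρ ^ (n / m) :=
    calc survProb Adm p π x z n ≤ uFun Adm p hA z n x := survProb_le_uFun Adm p hA hp z π x n
      _ ≤ U n := hUk n x
      _ ≤ U (m * (n / m)) := hUanti (by
          rw [Nat.mul_comm]; exact Nat.div_mul_le_self n m)
      _ ≤ (U m) ^ (n / m) := hpow (n / m)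
      _ ≤ ρ ^ (n / m) := pow_le_pow_left₀ (hUnn m) (le_max_left _ _) _
  refine le_trans hk ?_
  -- now `ρ ^ (n / m) ≤ 2 * (ρ ^ m⁻¹) ^ (n + 1)`
  have hmR : (0 : ℝ) < (m : ℝ) := by exact_mod_cast hmpos
  have hnk : (n : ℝ) + 1 ≤ (m : ℝ) * ((n / m : ℕ) + 1) := by
    have h1 : n + 1 ≤ m * (n / m) + m := by
      have h2 := Nat.div_add_mod n m
      have h3 := Nat.mod_lt n hmpos
      omega
    have := (Nat.cast_le (α := ℝ)).mpr h1
    push_cast at this ⊢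
    linarith
  have hexp : (m : ℝ)⁻¹ * ((n : ℝ) + 1) - 1 ≤ ((n / m : ℕ) : ℝ) := by
    rw [sub_le_iff_le_add, inv_mul_le_iff₀ hmR]
    exact hnk
  have hrw : (ρ ^ ((m : ℝ)⁻¹)) ^ (n + 1) = ρ ^ ((m : ℝ)⁻¹ * ((n : ℝ) + 1)) := by
    rw [← Real.rpow_natCast (ρ ^ ((m : ℝ)⁻¹)) (n + 1), ← Real.rpow_mul (le_of_lt hρpos)]
    push_cast
    ring_nf
  have hmain : ρ ^ ((n / m : ℕ) : ℝ) ≤ ρ ^ ((m : ℝ)⁻¹ * ((n : ℝ) + 1) - 1) :=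
    Real.rpow_le_rpow_of_exponent_ge hρpos (le_of_lt hρlt1) hexp
  have hsplit : ρ ^ ((m : ℝ)⁻¹ * ((n : ℝ) + 1) - 1)
      = ρ ^ ((m : ℝ)⁻¹ * ((n : ℝ) + 1)) * ρ⁻¹ := by
    rw [sub_eq_add_neg, Real.rpow_add hρpos, Real.rpow_neg_one]
  calc ρ ^ (n / m) = ρ ^ ((n / m : ℕ) : ℝ) := (Real.rpow_natCast ρ (n / m)).symm
    _ ≤ ρ ^ ((m : ℝ)⁻¹ * ((n : ℝ) + 1)) * ρ⁻¹ := by rw [← hsplit]; exact hmain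
    _ ≤ ρ ^ ((m : ℝ)⁻¹ * ((n : ℝ) + 1)) * 2 :=
        mul_le_mul_of_nonneg_left hρinv (le_of_lt (Real.rpow_pos_of_pos hρpos _))
    _ = 2 * (ρ ^ ((m : ℝ)⁻¹)) ^ (n + 1) := by rw [hrw, mul_comm]

end RiskSensitive
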